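/- Given a system objective function φ : S → ℝ with structure vector v^φ ∈ ℝ^S defined by v^φ(x) = φ(x), there exist local information based utility functions c_i such that the resulting game is a potential game with potential function φ, if and only if v^φ lies in the intersection over all players i of the column spans of the utility design matrices T_i. -/

import Mathlib

open Matrix

/-- The `W`-drawing matrix. -/
def drawing {n : ℕ} (S : Fin n → Type*) [∀ i, Fintype (S i)] [∀ i, DecidableEq (S i)]
    (W : Finset (Fin n)) :
    Matrix ((j : {j : Fin n // j ∈ W}) → S j.1) ((j : Fin n) → S j) ℝ :=
  fun u x => if (fun j : {j : Fin n // j ∈ W} => x j.1) = u then 1 else 0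

/-- The utility design matrix `T_i = [Γ_{N_i}ᵀ, Γ_{N\{i}}ᵀ]`. -/
def Tmat {n : ℕ} (S : Fin n → Type*) [∀ i, Fintype (S i)] [∀ i, DecidableEq (S i)]
    (U : Fin n → Finset (Fin n)) (i : Fin n) :
    Matrix ((j : Fin n) → S j)
      (((j : {j : Fin n // j ∈ insert i (U i)}) → S j.1) ⊕
        ((j : {j : Fin n // j ∈ Finset.univ.erase i}) → S j.1)) ℝ :=
  Matrix.fromCols (drawing S (insert i (U i)))ᵀ (drawing S (Finset.univ.erase i))ᵀ

/-- `Λ_i`. -/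
def Lmat {n : ℕ} (S : Fin n → Type*) [∀ i, Fintype (S i)] [∀ i, DecidableEq (S i)]
    (U : Fin n → Finset (Fin n)) (i : Fin n) :
    Matrix ((j : {j : Fin n // j ∈ insert i (U i)}) → S j.1)
      ((j : {j : Fin n // j ∈ U i}) → S j.1) ℝ :=
  fun x y =>
    if (fun j : {j : Fin n // j ∈ U i} => x ⟨j.1, Finset.mem_insert_of_mem j.2⟩) = y then 1 else 0

/-- `Υ_i`. -/
def Umat {n : ℕ} (S : Fin n → Type*) [∀ i, Fintype (S i)] [∀ i, DecidableEq (S i)]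
    (U : Fin n → Finset (Fin n)) (hU : ∀ i, i ∉ U i) (i : Fin n) :
    Matrix ((j : {j : Fin n // j ∈ Finset.univ.erase i}) → S j.1)
      ((j : {j : Fin n // j ∈ U i}) → S j.1) ℝ :=
  fun x y =>
    if (fun j : {j : Fin n // j ∈ U i} =>
        x ⟨j.1, Finset.mem_erase.mpr ⟨fun h => hU i (by simpa [h] using j.2), Finset.mem_univ _⟩⟩) = y
    then 1 else 0

/-- `H_i = [Λ_i; -Υ_i]`. -/
def Hmat {n : ℕ} (S : Fin n → Type*) [∀ i, Fintype (S i)] [∀ i, DecidableEq (S i)]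
    (U : Fin n → Finset (Fin n)) (hU : ∀ i, i ∉ U i) (i : Fin n) :
    Matrix (((j : {j : Fin n // j ∈ insert i (U i)}) → S j.1) ⊕
        ((j : {j : Fin n // j ∈ Finset.univ.erase i}) → S j.1))
      ((j : {j : Fin n // j ∈ U i}) → S j.1) ℝ :=
  Matrix.fromRows (Lmat S U i) (-(Umat S U hU i))

lemma mem_span_Tmat_iff {n : ℕ} {S : Fin n → Type*} [∀ i, Fintype (S i)]
    [∀ i, DecidableEq (S i)] (U : Fin n → Finset (Fin n)) (i : Fin n)
    (f : ((j : Fin n) → S j) → ℝ) :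
    f ∈ Submodule.span ℝ (Set.range (Tmat S U i)ᵀ) ↔
      ∃ g : ((j : {j : Fin n // j ∈ insert i (U i)}) → S j.1) → ℝ,
      ∃ h : ((j : {j : Fin n // j ∈ Finset.univ.erase i}) → S j.1) → ℝ,
      ∀ x, f x = g (fun j => x j.1) + h (fun j => x j.1) := by
  classical
  refine (Submodule.mem_span_range_iff_exists_fun ℝ).trans ?_
  have hsum : ∀ (w : _ → ℝ) (x : (j : Fin n) → S j),
      (∑ u, w u • (Tmat S U i)ᵀ u) x =
        w (Sum.inl (fun j => x j.1)) + w (Sum.inr (fun j => x j.1)) := by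
    intro w x
    rw [Finset.sum_apply]
    rw [Fintype.sum_sum_type]
    have h1 : ∀ u, (w (Sum.inl u) • (Tmat S U i)ᵀ (Sum.inl u)) x =
        if (fun j : {j : Fin n // j ∈ insert i (U i)} => x j.1) = u
        then w (Sum.inl u) else 0 := by
      intro u
      simp [Tmat, drawing, Matrix.fromCols, mul_ite]
    have h2 : ∀ u, (w (Sum.inr u) • (Tmat S U i)ᵀ (Sum.inr u)) x =
        if (fun j : {j : Fin n // j ∈ Finset.univ.erase i} => x j.1) = u
        then w (Sum.inr u) else 0 := by
      intro u
      simp [Tmat, drawing, Matrix.fromCols, mul_ite]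
    simp only [h1, h2]
    simp [Finset.sum_ite_eq]
  constructor
  · rintro ⟨w, hw⟩
    refine ⟨fun u => w (Sum.inl u), fun v => w (Sum.inr v), fun x => ?_⟩
    rw [← congrFun hw x, hsum]
  · rintro ⟨g, h, hgh⟩
    refine ⟨Sum.elim g h, funext fun x => ?_⟩
    rw [hsum, hgh x]
    simp

/-- There exist local information based utility functions making the game a
potential game with potential function `φ` iff the structure vector `v^φ = fun x => φ x`
lies in the intersection over all players `i` of the column spans of the utility design
matrices `T_i`. -/
theorem local_utility_design_iff_mem_inf_colSpan
    {n : ℕ} {S : Fin n → Type*} [∀ i, Fintype (S i)] [∀ i, DecidableEq (S i)]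
    [∀ i, Nonempty (S i)]
    (U : Fin n → Finset (Fin n)) (hU : ∀ i, i ∉ U i)
    (φ : ((j : Fin n) → S j) → ℝ) :
    (∃ c : Fin n → ((j : Fin n) → S j) → ℝ,
        (∀ (i : Fin n) (x y : (j : Fin n) → S j),
            (∀ j ∈ insert i (U i), x j = y j) → c i x = c i y) ∧
        (∀ (i : Fin n) (s : (j : Fin n) → S j) (a b : S i),
            c i (Function.update s i a) - c i (Function.update s i b) =
              φ (Function.update s i a) - φ (Function.update s i b))) ↔
      (fun x => φ x) ∈
        ⨅ i : Fin n, Submodule.span ℝ (Set.range (Tmat S U i)ᵀ) := by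
  classical
  rw [Submodule.mem_iInf]
  constructor
  · rintro ⟨c, hloc, hpot⟩ i
    rw [mem_span_Tmat_iff]
    set ext1 : ((j : {j : Fin n // j ∈ insert i (U i)}) → S j.1) → ((j : Fin n) → S j) :=
      fun u j => if hj : j ∈ insert i (U i) then u ⟨j, hj⟩ else Classical.arbitrary (S j)
      with hext1
    set ext2 : ((j : {j : Fin n // j ∈ Finset.univ.erase i}) → S j.1) → ((j : Fin n) → S j) :=
      fun v j => if hj : j ∈ Finset.univ.erase i then v ⟨j, hj⟩ else Classical.arbitrary (S j)
      with hext2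
    refine ⟨fun u => c i (ext1 u), fun v => φ (ext2 v) - c i (ext2 v), fun x => ?_⟩
    have h1 : c i (ext1 (fun j => x j.1)) = c i x := by
      refine hloc i _ x fun j hj => ?_
      simp only [hext1]
      rw [dif_pos hj]
    have h2 : φ (ext2 (fun j => x j.1)) - c i (ext2 (fun j => x j.1)) = φ x - c i x := by
      set y := ext2 (fun j : {j : Fin n // j ∈ Finset.univ.erase i} => x j.1) with hy
      have hyx : ∀ j, j ≠ i → y j = x j := by
        intro j hj
        have hj' : j ∈ Finset.univ.erase i := Finset.mem_erase.mpr ⟨hj, Finset.mem_univ _⟩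
        simp only [hy, hext2]
        rw [dif_pos hj']
      have hupa : Function.update x i (y i) = y := by
        funext j
        by_cases hj : j = i
        · subst hj; simp
        · rw [Function.update_of_ne hj, hyx j hj]
      have hupb : Function.update x i (x i) = x := Function.update_eq_self _ _
      have := hpot i x (y i) (x i)
      rw [hupa, hupb] at this
      linarith
    show φ x = c i (ext1 fun j => x j.1) + (φ (ext2 fun j => x j.1) - c i (ext2 fun j => x j.1))
    rw [h1, h2]
    ring
  · intro hmem
    choose g h hgh using fun i => (mem_span_Tmat_iff U i _).mp (hmem i)
    refine ⟨fun i x => g i (fun j => x j.1), ?_, ?_⟩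
    · intro i x y hxy
      have : (fun j : {j : Fin n // j ∈ insert i (U i)} => x j.1) =
          fun j : {j : Fin n // j ∈ insert i (U i)} => y j.1 := by
        funext j
        exact hxy _ j.2
      simp only [this]
    · intro i s a b
      have ea := hgh i (Function.update s i a)
      have eb := hgh i (Function.update s i b)
      have hres : (fun j : {j : Fin n // j ∈ Finset.univ.erase i} =>
          Function.update s i a j.1) =
          fun j : {j : Fin n // j ∈ Finset.univ.erase i} => Function.update s i b j.1 := by
        funext j
        have hj : j.1 ≠ i := Finset.ne_of_mem_erase j.2
        rw [Function.update_of_ne hj, Function.update_of_ne hj]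
      rw [ea, eb, hres]
      ring
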